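/- Let n, m, p be positive integers, A, U real n×n matrices, B a real n×m matrix, and C_p a real p×n matrix. Let P be a real symmetric positive definite n×n matrix, set X := P⁻¹, and let γ₁ ≥ 0, γ₂ ≥ 0 be real scalars. Then the 2×2 block matrix [[Aᵀ P + P A + C_pᵀ C_p − γ₁ Uᵀ U, P B], [Bᵀ P, −γ₂ I]] is negative semidefinite if and only if the 3×3 block matrix [[−I, C_p X, 0], [X C_pᵀ, X Aᵀ + A X − γ₁ X Uᵀ U X, B], [0, Bᵀ, −γ₂ I]] is negative semidefinite. (This is the exact Schur-complement-plus-congruence reformulation of the impact LMI performed in the proof of the convex relaxation theorem.) -/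

import Mathlib

open Matrix

private lemma psd_congr_iff {k : Type*} [Fintype k] [DecidableEq k]
    (M T : Matrix k k ℝ) [Invertible T] :
    M.PosSemidef ↔ (Tᴴ * M * T).PosSemidef := by
  constructor
  · exact fun h => h.conjTranspose_mul_mul_same T
  · intro h
    have h2 := h.conjTranspose_mul_mul_same (⅟T)
    have : (⅟T)ᴴ * (Tᴴ * M * T) * ⅟T = M := by
      calc (⅟T)ᴴ * (Tᴴ * M * T) * ⅟T = ((⅟T)ᴴ * Tᴴ) * M * (T * ⅟T) := by
            simp only [Matrix.mul_assoc]
        _ = M := by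
            rw [← conjTranspose_mul, mul_invOf_self, conjTranspose_one,
              Matrix.one_mul, Matrix.mul_one]
    rwa [this] at h2

/-- Exact Schur-complement-plus-congruence reformulation of the impact LMI: with
`X := P⁻¹`, the 2×2 block LMI `L₇(P,γ₁,γ₂) ⪯ 0` holds iff the 3×3 block LMI
`L₁₃(X,γ₁,γ₂) ⪯ 0` holds. -/
theorem stmt_11 {n m p : ℕ} (hn : 0 < n) (hm : 0 < m) (hp : 0 < p)
    (A U : Matrix (Fin n) (Fin n) ℝ) (B : Matrix (Fin n) (Fin m) ℝ)
    (Cp : Matrix (Fin p) (Fin n) ℝ)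
    (P : Matrix (Fin n) (Fin n) ℝ) (hPsym : P.IsSymm) (hP : P.PosDef)
    (X : Matrix (Fin n) (Fin n) ℝ) (hX : X = P⁻¹)
    (γ₁ γ₂ : ℝ) (hγ₁ : 0 ≤ γ₁) (hγ₂ : 0 ≤ γ₂) :
    (-(Matrix.fromBlocks
        (Aᵀ * P + P * A + Cpᵀ * Cp - γ₁ • (Uᵀ * U)) (P * B)
        (Bᵀ * P) (-(γ₂ • (1 : Matrix (Fin m) (Fin m) ℝ))))).PosSemidef ↔
    (-(Matrix.fromBlocks
        (Matrix.fromBlocks (-1) (Cp * X) (X * Cpᵀ)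
          (X * Aᵀ + A * X - γ₁ • (X * Uᵀ * U * X)))
        (Matrix.fromRows 0 B)
        (Matrix.fromCols 0 Bᵀ)
        (-(γ₂ • (1 : Matrix (Fin m) (Fin m) ℝ))))).PosSemidef := by
  have hPunit : IsUnit P := hP.isUnit
  have hXP : X * P = 1 := by rw [hX]; exact nonsing_inv_mul P (isUnit_iff_isUnit_det P |>.mp hPunit)
  have hPX : P * X = 1 := by rw [hX]; exact mul_nonsing_inv P (isUnit_iff_isUnit_det P |>.mp hPunit)
  have hXsym : Xᵀ = X := by
    rw [hX, Matrix.transpose_nonsing_inv, hPsym.eq]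
  have hXc : Xᴴ = X := by rw [conjTranspose_eq_transpose_of_trivial, hXsym]
  -- the key algebraic blocks
  set K : Matrix (Fin n) (Fin n) ℝ := Aᵀ * P + P * A + Cpᵀ * Cp - γ₁ • (Uᵀ * U) with hK
  set S : Matrix (Fin n) (Fin n) ℝ := X * Aᵀ + A * X - γ₁ • (X * Uᵀ * U * X) with hS
  -- congruence transform T = [[X,0],[0,1]]
  have : Invertible (fromBlocks X 0 0 (1 : Matrix (Fin m) (Fin m) ℝ)) :=
    ⟨fromBlocks P 0 0 1,
      by simp [fromBlocks_multiply, hPX, ← fromBlocks_one],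
      by simp [fromBlocks_multiply, hXP, ← fromBlocks_one]⟩
  rw [psd_congr_iff _ (fromBlocks X 0 0 (1 : Matrix (Fin m) (Fin m) ℝ))]
  have h1 : X * (P * B) = B := by rw [← Matrix.mul_assoc, hXP, Matrix.one_mul]
  have hcong : (fromBlocks X 0 0 (1 : Matrix (Fin m) (Fin m) ℝ))ᴴ *
      (-(fromBlocks K (P * B) (Bᵀ * P) (-(γ₂ • (1 : Matrix (Fin m) (Fin m) ℝ))))) *
      (fromBlocks X 0 0 (1 : Matrix (Fin m) (Fin m) ℝ)) =
      fromBlocks (-(X * K * X)) (-B) (-Bᵀ) (γ₂ • 1) := by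
    simp [fromBlocks_conjTranspose, fromBlocks_transpose, fromBlocks_multiply, fromBlocks_neg,
      Matrix.mul_neg, Matrix.neg_mul, hXsym, hXc, Matrix.mul_assoc, h1, hPX, neg_neg]
  rw [hcong]
  -- reindex the 3×3 matrix
  set Big := (-(Matrix.fromBlocks
        (Matrix.fromBlocks (-1) (Cp * X) (X * Cpᵀ) S)
        (Matrix.fromRows 0 B)
        (Matrix.fromCols 0 Bᵀ)
        (-(γ₂ • (1 : Matrix (Fin m) (Fin m) ℝ))))) with hBig
  set N : Matrix (Fin p ⊕ (Fin n ⊕ Fin m)) (Fin p ⊕ (Fin n ⊕ Fin m)) ℝ :=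
    fromBlocks 1 (fromCols (-(Cp * X)) 0)
      (fromRows (-(X * Cpᵀ)) 0) (fromBlocks (-S) (-B) (-Bᵀ) (γ₂ • 1)) with hN
  have hsub : Big.submatrix (Equiv.sumAssoc (Fin p) (Fin n) (Fin m)).symm
      (Equiv.sumAssoc (Fin p) (Fin n) (Fin m)).symm = N := by
    ext i j
    rcases i with i | (i | i) <;> rcases j with j | (j | j) <;>
      simp [hBig, hN, fromBlocks, Equiv.sumAssoc, submatrix,
        Matrix.one_apply, Matrix.smul_apply, apply_ite, fromRows_apply_inl, fromRows_apply_inr,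
        fromCols_apply_inl, fromCols_apply_inr]
    all_goals (split <;> simp_all)
  have hBigIff : Big.PosSemidef ↔ N.PosSemidef := by
    constructor
    · intro h; rw [← hsub]; exact h.submatrix _
    · intro h
      have := h.submatrix (Equiv.sumAssoc (Fin p) (Fin n) (Fin m))
      rwa [← hsub, submatrix_submatrix, Equiv.symm_comp_self, submatrix_id_id] at this
  rw [hBigIff]
  -- Schur complement on the (1,1) block of N, which is 1
  have h1pd : (1 : Matrix (Fin p) (Fin p) ℝ).PosDef := Matrix.PosDef.one
  haveI : Invertible (1 : Matrix (Fin p) (Fin p) ℝ) := invertibleOne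
  have hconj : (fromCols (-(Cp * X)) (0 : Matrix (Fin p) (Fin m) ℝ))ᴴ
      = fromRows (-(X * Cpᵀ)) 0 := by
    rw [conjTranspose_eq_transpose_of_trivial, transpose_fromCols]
    simp [hXsym, Matrix.transpose_mul, ← Matrix.mul_assoc]
  have hschur := Matrix.PosDef.fromBlocks₁₁ (A := (1 : Matrix (Fin p) (Fin p) ℝ))
      (fromCols (-(Cp * X)) (0 : Matrix (Fin p) (Fin m) ℝ))
      (fromBlocks (-S) (-B) (-Bᵀ) (γ₂ • (1 : Matrix (Fin m) (Fin m) ℝ))) h1pd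
  rw [hN, ← hconj, hschur]
  -- identify the Schur complement with the congruenced 2×2 matrix
  have hXKX : X * K * X = X * Aᵀ + A * X + X * Cpᵀ * (Cp * X) - γ₁ • (X * Uᵀ * U * X) := by
    have e1 : X * (Aᵀ * P) * X = X * Aᵀ := by
      rw [← Matrix.mul_assoc X Aᵀ P, Matrix.mul_assoc (X * Aᵀ) P X, hPX, Matrix.mul_one]
    have e2 : X * (P * A) * X = A * X := by
      rw [← Matrix.mul_assoc X P A, hXP, Matrix.one_mul]
    have e3 : X * (Cpᵀ * Cp) * X = X * Cpᵀ * (Cp * X) := by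
      rw [← Matrix.mul_assoc X Cpᵀ Cp, Matrix.mul_assoc (X * Cpᵀ) Cp X]
    have e4 : X * (Uᵀ * U) * X = X * Uᵀ * U * X := by
      rw [← Matrix.mul_assoc X Uᵀ U]
    rw [hK]
    simp only [Matrix.mul_add, Matrix.add_mul, Matrix.mul_sub, Matrix.sub_mul,
      Matrix.mul_smul, Matrix.smul_mul]
    rw [e1, e2, e3, e4]
  have hSc : fromBlocks (-S) (-B) (-Bᵀ) (γ₂ • (1 : Matrix (Fin m) (Fin m) ℝ)) -
      (fromCols (-(Cp * X)) (0 : Matrix (Fin p) (Fin m) ℝ))ᴴ * (1 : Matrix (Fin p) (Fin p) ℝ)⁻¹ *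
      (fromCols (-(Cp * X)) (0 : Matrix (Fin p) (Fin m) ℝ)) =
      fromBlocks (-(X * K * X)) (-B) (-Bᵀ) (γ₂ • 1) := by
    rw [hconj, inv_one, Matrix.mul_one, fromRows_mul_fromCols]
    have htl : -(X * K * X) = -S - X * Cpᵀ * (Cp * X) := by
      rw [hXKX, hS]; abel
    ext i j
    rcases i with i | i <;> rcases j with j | j <;>
      simp [fromBlocks, htl, Matrix.sub_apply, Matrix.neg_apply, Matrix.mul_apply]
  rw [hSc]
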